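/- arXiv:0903.4045 — 7 statements merged into one kernel-verified Lean document; each statement's English description precedes it below -/
import Mathlib

section
/- Let a group G act by unitary operators on a complex Hilbert space V and let u : G → V be a 1-cocycle. For t ∈ G let p_t denote the orthogonal projection onto the subspace V^t = {x ∈ V : t·x = x} of t-fixed vectors, and set s_t = p_t(u(t)). Then for all φ, t ∈ G one has s_{φ t φ^{-1}} = φ·s_t. -/
/-- Let a group `G` act by unitary operators on a complex Hilbert
space `V` (via `ρ : G →* (V ≃ₗᵢ[ℂ] V)`) and let `u : G → V` be a 1-cocycle.
For `t ∈ G` let `p t` be the orthogonal projection onto the subspace `V^t` of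
`t`-fixed vectors (characterized by: `p t x` is `t`-fixed and `x - p t x` is
orthogonal to every `t`-fixed vector), and set `s t = p t (u t)`.  Then for all
`φ, t ∈ G` one has `s (φ t φ⁻¹) = φ • s t`. -/
theorem s_natural
    {G V : Type*} [Group G]
    [NormedAddCommGroup V] [InnerProductSpace ℂ V] [CompleteSpace V]
    (ρ : G →* (V ≃ₗᵢ[ℂ] V)) (p : G → V → V)
    (hp_mem : ∀ (t : G) (x : V), ρ t (p t x) = p t x)
    (hp_orth : ∀ (t : G) (x y : V), ρ t y = y →
      (inner ℂ (x - p t x) y : ℂ) = 0)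
    (u : G → V) (hu : ∀ a b : G, u (a * b) = u a + ρ a (u b))
    (φ t : G) :
    p (φ * t * φ⁻¹) (u (φ * t * φ⁻¹)) = ρ φ (p t (u t)) := by
  have hmul : ∀ (a b : G) (x : V), ρ (a * b) x = ρ a (ρ b x) := by
    intro a b x; simp [map_mul]
  have hunit : ∀ (g : G) (x y : V), (inner ℂ (ρ g x) (ρ g y) : ℂ) = inner ℂ x y :=
    fun g x y => (ρ g).inner_map_map x y
  set t' := φ * t * φ⁻¹ with ht'
  set v := ρ φ (p t (u t)) with hv
  set w := p t' (u t') with hw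
  -- v is fixed by t'
  have hvfix : ρ t' v = v := by
    rw [hv, ← hmul]
    have h1 : t' * φ = φ * t := by rw [ht']; group
    rw [h1, hmul, hp_mem]
  -- u 1 = 0
  have hu1 : u 1 = 0 := by
    have h := hu 1 1
    simp at h
    exact h
  -- ρ φ⁻¹ (u φ) = - u φ⁻¹
  have huinv : ρ φ⁻¹ (u φ) = - u φ⁻¹ := by
    have h := hu φ⁻¹ φ
    rw [inv_mul_cancel, hu1] at h
    exact eq_neg_of_add_eq_zero_right h.symm
  -- decomposition of u t' - v
  have hdecomp : u t' - v = (u φ - ρ t' (u φ)) + ρ φ (u t - p t (u t)) := by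
    have h1 : u t' = u φ + ρ φ (u t) + ρ (φ * t) (u φ⁻¹) := by
      rw [ht', hu (φ * t) φ⁻¹, hu φ t]
    have h2 : ρ t' (u φ) = - ρ (φ * t) (u φ⁻¹) := by
      have : t' = (φ * t) * φ⁻¹ := by rw [ht']
      rw [this, hmul, huinv, map_neg]
    rw [h1, h2, hv, map_sub]
    abel
  -- u t' - v is orthogonal to every t'-fixed vector
  have horth : ∀ y : V, ρ t' y = y → (inner ℂ (u t' - v) y : ℂ) = 0 := by
    intro y hy
    rw [hdecomp, inner_add_left, inner_sub_left]
    have h1 : (inner ℂ (ρ t' (u φ)) y : ℂ) = inner ℂ (u φ) y := by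
      conv_lhs => rw [← hy]
      exact hunit t' (u φ) y
    have h2 : (inner ℂ (ρ φ (u t - p t (u t))) y : ℂ) = 0 := by
      have hyφ : ρ φ (ρ φ⁻¹ y) = y := by
        rw [← hmul]; simp
      have hfix : ρ t (ρ φ⁻¹ y) = ρ φ⁻¹ y := by
        rw [← hmul]
        have h3 : t * φ⁻¹ = φ⁻¹ * t' := by rw [ht']; group
        rw [h3, hmul, hy]
      conv_lhs => rw [← hyφ]
      rw [hunit]
      exact hp_orth t (u t) (ρ φ⁻¹ y) hfix
    rw [h1, h2]
    ring
  -- uniqueness: v = w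
  have hwfix : ρ t' w = w := hp_mem t' (u t')
  have hvw : ρ t' (v - w) = v - w := by rw [map_sub, hvfix, hwfix]
  have key : (inner ℂ (v - w) (v - w) : ℂ) = 0 := by
    have h1 : (inner ℂ (u t' - w) (v - w) : ℂ) = 0 := hp_orth t' (u t') (v - w) hvw
    have h2 : (inner ℂ (u t' - v) (v - w) : ℂ) = 0 := horth (v - w) hvw
    have : (u t' - w) - (u t' - v) = v - w := by abel
    calc (inner ℂ (v - w) (v - w) : ℂ)
        = inner ℂ ((u t' - w) - (u t' - v)) (v - w) := by rw [this]
      _ = inner ℂ (u t' - w) (v - w) - inner ℂ (u t' - v) (v - w) := inner_sub_left _ _ _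
      _ = 0 := by rw [h1, h2, sub_zero]
  have hvw0 : v - w = 0 := inner_self_eq_zero.mp key
  exact (sub_eq_zero.mp hvw0).symm
end

section
/- Let a group G act by unitary operators on a complex Hilbert space V and let u : G → V be a 1-cocycle. Let t ∈ G and let φ ∈ G be any element commuting with t. Then φ·s_t = s_t, where s_t = p_t(u(t)) and p_t is the orthogonal projection onto the subspace of t-fixed vectors. -/
/-- Let a group `G` act by unitary operators on a complex Hilbert
space `V` (via `ρ : G →* (V ≃ₗᵢ[ℂ] V)`) and let `u : G → V` be a 1-cocycle.
Let `t ∈ G` and let `φ ∈ G` commute with `t`.  Then `φ • s t = s t`, where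
`s t = p t (u t)` and `p t` is the orthogonal projection onto the subspace of
`t`-fixed vectors (characterized by: `p t x` is `t`-fixed and `x - p t x` is
orthogonal to every `t`-fixed vector). -/
theorem s_fixed_by_commuting
    {G V : Type*} [Group G]
    [NormedAddCommGroup V] [InnerProductSpace ℂ V] [CompleteSpace V]
    (ρ : G →* (V ≃ₗᵢ[ℂ] V)) (p : G → V → V)
    (hp_mem : ∀ (t : G) (x : V), ρ t (p t x) = p t x)
    (hp_orth : ∀ (t : G) (x y : V), ρ t y = y →
      (inner ℂ (x - p t x) y : ℂ) = 0)
    (u : G → V) (hu : ∀ a b : G, u (a * b) = u a + ρ a (u b))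
    (t φ : G) (hcomm : φ * t = t * φ) :
    ρ φ (p t (u t)) = p t (u t) := by
  -- composition of the action
  have hcomp : ∀ (a b : G) (x : V), ρ a (ρ b x) = ρ (a * b) x := by
    intro a b x
    rw [map_mul]
    rfl
  -- a `t`-fixed vector is also `g`-fixed whenever `g * t = t * g` forces it; in
  -- particular `t⁻¹`-fixed, and `ρ φ⁻¹` maps fixed vectors to fixed vectors.
  have hfix_inv : ∀ y : V, ρ t y = y → ρ t⁻¹ y = y := by
    intro y hy
    conv_lhs => rw [← hy]
    rw [hcomp, inv_mul_cancel, map_one]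
    rfl
  have hcomm' : t * φ⁻¹ = φ⁻¹ * t := by
    have := congrArg (fun g => φ⁻¹ * g * φ⁻¹) hcomm
    simpa [mul_assoc] using this
  have hfix_phiinv : ∀ y : V, ρ t y = y → ρ t (ρ φ⁻¹ y) = ρ φ⁻¹ y := by
    intro y hy
    rw [hcomp, hcomm', ← hcomp, hy]
  -- uniqueness of the projection
  have huniq : ∀ x z : V, ρ t z = z →
      (∀ y : V, ρ t y = y → (inner ℂ (x - z) y : ℂ) = 0) → z = p t x := by
    intro x z hz horth
    have hd : ρ t (p t x - z) = p t x - z := by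
      rw [map_sub, hp_mem, hz]
    have h0 : (inner ℂ (p t x - z) (p t x - z) : ℂ) = 0 := by
      have h1 : (inner ℂ (x - z) (p t x - z) : ℂ) = 0 := horth _ hd
      have h2 : (inner ℂ (x - p t x) (p t x - z) : ℂ) = 0 := hp_orth t x _ hd
      have h3 : (inner ℂ ((x - z) - (x - p t x)) (p t x - z) : ℂ) = 0 := by
        rw [inner_sub_left, h1, h2, sub_zero]
      simpa using h3
    have h4 : p t x - z = 0 := inner_self_eq_zero.mp h0
    exact (sub_eq_zero.mp h4).symm
  set s := p t (u t) with hs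
  -- Step 1: `ρ φ s = p t (ρ φ (u t))`.
  have hstep1 : ρ φ s = p t (ρ φ (u t)) := by
    apply huniq
    · rw [hcomp, ← hcomm, ← hcomp, hp_mem]
    · intro y hy
      have : ρ φ (u t) - ρ φ s = ρ φ (u t - s) := by rw [map_sub]
      rw [this]
      have hy' : ρ t (ρ φ⁻¹ y) = ρ φ⁻¹ y := hfix_phiinv y hy
      have horth := hp_orth t (u t) (ρ φ⁻¹ y) hy'
      calc (inner ℂ (ρ φ (u t - s)) y : ℂ)
          = inner ℂ (ρ φ (u t - s)) (ρ φ (ρ φ⁻¹ y)) := by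
            rw [hcomp, mul_inv_cancel, map_one]; rfl
        _ = inner ℂ (u t - s) (ρ φ⁻¹ y) := (ρ φ).inner_map_map _ _
        _ = 0 := horth
  -- Step 2: `s = p t (ρ φ (u t))`, using the cocycle identity.
  have hcocycle : ρ φ (u t) = u t + (ρ t (u φ) - u φ) := by
    have h1 : u (φ * t) = u φ + ρ φ (u t) := hu φ t
    have h2 : u (t * φ) = u t + ρ t (u φ) := hu t φ
    rw [hcomm, h2] at h1
    calc ρ φ (u t) = (u φ + ρ φ (u t)) - u φ := by abel
      _ = (u t + ρ t (u φ)) - u φ := by rw [h1]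
      _ = u t + (ρ t (u φ) - u φ) := by abel
  have hstep2 : s = p t (ρ φ (u t)) := by
    apply huniq
    · exact hp_mem t (u t)
    · intro y hy
      rw [hcocycle]
      have h1 : (inner ℂ (u t - s) y : ℂ) = 0 := hp_orth t (u t) y hy
      have h2 : (inner ℂ (ρ t (u φ) - u φ) y : ℂ) = 0 := by
        have : (inner ℂ (ρ t (u φ)) y : ℂ) = inner ℂ (u φ) y := by
          calc (inner ℂ (ρ t (u φ)) y : ℂ)
              = inner ℂ (ρ t (u φ)) (ρ t y) := by rw [hy]
            _ = inner ℂ (u φ) y := (ρ t).inner_map_map _ _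
        rw [inner_sub_left, this, sub_self]
      have : u t + (ρ t (u φ) - u φ) - s = (u t - s) + (ρ t (u φ) - u φ) := by
        abel
      rw [this, inner_add_left, h1, h2, add_zero]
  rw [hstep1, ← hstep2]
end

section
/- Let a group G act by unitary operators on a complex Hilbert space V and let u : G → V be a 1-cocycle; for t ∈ G set s_t = p_t(u(t)), where p_t is the orthogonal projection onto the t-fixed vectors. Suppose a, b, c, d, e, h ∈ G satisfy the relation (abc)^4 = de, that each of a, b, c, d, e commutes with h, and that there is a constant κ ∈ ℂ with ⟨s_x, s_h⟩ = κ for every x ∈ {a, b, c, d, e}. Then κ = 0. -/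
/-- abstract two-holed torus / chain relation computation: Let a
group `G` act by unitary operators on a complex Hilbert space `V` (via
`ρ : G →* (V ≃ₗᵢ[ℂ] V)`) and let `u : G → V` be a 1-cocycle; for `t ∈ G` set
`s t = p t (u t)`, where `p t` is the orthogonal projection onto the `t`-fixed
vectors (characterized by: `p t x` is `t`-fixed and `x - p t x` is orthogonal
to every `t`-fixed vector).  Suppose `a, b, c, d, e, h ∈ G` satisfy
`(a b c)^4 = d e`, that each of `a, b, c, d, e` commutes with `h`, and that
there is `κ ∈ ℂ` with `⟨s x, s h⟩ = κ` for every `x ∈ {a, b, c, d, e}`.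
Then `κ = 0`. -/
theorem chain_relation_inner_eq_zero
    {G V : Type*} [Group G]
    [NormedAddCommGroup V] [InnerProductSpace ℂ V] [CompleteSpace V]
    (ρ : G →* (V ≃ₗᵢ[ℂ] V)) (p : G → V → V)
    (hp_mem : ∀ (t : G) (x : V), ρ t (p t x) = p t x)
    (hp_orth : ∀ (t : G) (x y : V), ρ t y = y →
      (inner ℂ (x - p t x) y : ℂ) = 0)
    (u : G → V) (hu : ∀ a b : G, u (a * b) = u a + ρ a (u b))
    (a b c d e h : G)
    (hrel : (a * b * c) ^ 4 = d * e)
    (hcomm : ∀ x ∈ [a, b, c, d, e], x * h = h * x)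
    (κ : ℂ)
    (hκ : ∀ x ∈ [a, b, c, d, e], (inner ℂ (p x (u x)) (p h (u h)) : ℂ) = κ) :
    κ = 0 := by
  set s : V := p h (u h) with hs
  have hρs : ρ h s = s := hp_mem h (u h)
  -- ⟨u h, s⟩ = ⟨s, s⟩
  have huhs : (inner ℂ (u h) s : ℂ) = inner ℂ s s := by
    have h0 := hp_orth h (u h) s hρs
    rw [inner_sub_left, sub_eq_zero] at h0
    exact h0
  -- key: every x commuting with h fixes s
  have key : ∀ x : G, x * h = h * x → ρ x s = s := by
    intro x hx
    have hcoc : u x + ρ x (u h) = u h + ρ h (u x) := by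
      rw [← hu x h, ← hu h x, hx]
    have h1 : (inner ℂ (ρ h (u x)) s : ℂ) = inner ℂ (u x) s := by
      conv_lhs => rw [← hρs]
      exact (ρ h).inner_map_map (u x) s
    have h2 : (inner ℂ (ρ x (u h)) s : ℂ) = inner ℂ (u h) s := by
      have h3 := congrArg (fun v => (inner ℂ v s : ℂ)) hcoc
      simp only [inner_add_left] at h3
      rw [h1] at h3
      linear_combination h3
    set y : V := ρ x⁻¹ s with hy
    have hxys : ρ x y = s := by
      rw [hy, map_inv]
      exact (ρ x).apply_symm_apply s
    have hyfix : ρ h y = y := by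
      have hx' : x⁻¹ * h = h * x⁻¹ := (Commute.inv_left hx).eq
      have : ρ h (ρ x⁻¹ s) = ρ (h * x⁻¹) s := by
        rw [map_mul]; rfl
      rw [hy, this, ← hx', map_mul]
      show ρ x⁻¹ (ρ h s) = ρ x⁻¹ s
      rw [hρs]
    have hOy : (inner ℂ (u h) y : ℂ) = inner ℂ s s := by
      calc (inner ℂ (u h) y : ℂ) = inner ℂ (ρ x (u h)) (ρ x y) := ((ρ x).inner_map_map _ _).symm
        _ = inner ℂ (ρ x (u h)) s := by rw [hxys]
        _ = inner ℂ (u h) s := h2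
        _ = inner ℂ s s := huhs
    have hsy : (inner ℂ s y : ℂ) = inner ℂ s s := by
      have h0 := hp_orth h (u h) y hyfix
      rw [inner_sub_left, sub_eq_zero] at h0
      rw [← h0, hOy]
    have hys : (inner ℂ y s : ℂ) = inner ℂ s s := by
      rw [← inner_conj_symm, hsy, inner_conj_symm]
    have hyy : (inner ℂ y y : ℂ) = inner ℂ s s := by
      rw [inner_self_eq_norm_sq_to_K, inner_self_eq_norm_sq_to_K]
      have : ‖y‖ = ‖s‖ := (ρ x⁻¹).norm_map s
      rw [this]
    have hzero : (inner ℂ (s - y) (s - y) : ℂ) = 0 := by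
      rw [inner_sub_left, inner_sub_right, inner_sub_right]
      rw [hsy, hys, hyy]
      ring
    have hseq : s = y := by
      have := inner_self_eq_zero.mp hzero
      rw [sub_eq_zero] at this
      exact this
    conv_lhs => rw [hseq]
    exact hxys
  have fixa : ρ a s = s := key a (hcomm a (by simp))
  have fixb : ρ b s = s := key b (hcomm b (by simp))
  have fixc : ρ c s = s := key c (hcomm c (by simp))
  have fixd : ρ d s = s := key d (hcomm d (by simp))
  have fixe : ρ e s = s := key e (hcomm e (by simp))
  have fixmul : ∀ g₁ g₂ : G, ρ g₁ s = s → ρ g₂ s = s → ρ (g₁ * g₂) s = s := by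
    intro g₁ g₂ h₁ h₂
    rw [map_mul]
    show ρ g₁ (ρ g₂ s) = s
    rw [h₂, h₁]
  -- F g := ⟨u g, s⟩ is additive when first factor fixes s
  have Fadd : ∀ g₁ g₂ : G, ρ g₁ s = s →
      (inner ℂ (u (g₁ * g₂)) s : ℂ) = inner ℂ (u g₁) s + inner ℂ (u g₂) s := by
    intro g₁ g₂ h₁
    rw [hu, inner_add_left]
    congr 1
    calc (inner ℂ (ρ g₁ (u g₂)) s : ℂ) = inner ℂ (ρ g₁ (u g₂)) (ρ g₁ s) := by rw [h₁]
      _ = inner ℂ (u g₂) s := (ρ g₁).inner_map_map _ _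
  have Fval : ∀ x : G, ρ x s = s → x ∈ [a, b, c, d, e] →
      (inner ℂ (u x) s : ℂ) = κ := by
    intro x hx hmem
    have h0 := hp_orth x (u x) s hx
    rw [inner_sub_left, sub_eq_zero] at h0
    rw [h0]
    exact hκ x hmem
  have Fa : (inner ℂ (u a) s : ℂ) = κ := Fval a fixa (by simp)
  have Fb : (inner ℂ (u b) s : ℂ) = κ := Fval b fixb (by simp)
  have Fc : (inner ℂ (u c) s : ℂ) = κ := Fval c fixc (by simp)
  have Fd : (inner ℂ (u d) s : ℂ) = κ := Fval d fixd (by simp)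
  have Fe : (inner ℂ (u e) s : ℂ) = κ := Fval e fixe (by simp)
  have fixab : ρ (a * b) s = s := fixmul a b fixa fixb
  have fixabc : ρ (a * b * c) s = s := fixmul (a * b) c fixab fixc
  have Fabc : (inner ℂ (u (a * b * c)) s : ℂ) = 3 * κ := by
    rw [Fadd (a * b) c fixab, Fadd a b fixa, Fa, Fb, Fc]; ring
  have fix2 : ρ ((a * b * c) * (a * b * c)) s = s := fixmul _ _ fixabc fixabc
  have fix3 : ρ (((a * b * c) * (a * b * c)) * (a * b * c)) s = s := fixmul _ _ fix2 fixabc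
  have hexp : (a * b * c) ^ 4 = (((a * b * c) * (a * b * c)) * (a * b * c)) * (a * b * c) := by
    rw [pow_succ, pow_succ, pow_succ, pow_one]
  have Flhs : (inner ℂ (u ((a * b * c) ^ 4)) s : ℂ) = 12 * κ := by
    rw [hexp, Fadd _ _ fix3, Fadd _ _ fix2, Fadd _ _ fixabc, Fabc]
    ring
  have Frhs : (inner ℂ (u (d * e)) s : ℂ) = 2 * κ := by
    rw [Fadd d e fixd, Fd, Fe]; ring
  have : (12 : ℂ) * κ = 2 * κ := by rw [← Flhs, ← Frhs, hrel]
  have h10 : (10 : ℂ) * κ = 0 := by linear_combination this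
  exact (mul_eq_zero.mp h10).resolve_left (by norm_num)
end

section
/- Let a group G act by unitary operators on a complex Hilbert space V and let u : G → V be a 1-cocycle; for t ∈ G set s_t = p_t(u(t)), where p_t is the orthogonal projection onto the t-fixed vectors. Suppose t_0, t_1, t_2, t_3, r_1, r_2, r_3 ∈ G satisfy the relation t_0 t_1 t_2 t_3 = r_1 r_2 r_3, that each of t_1, t_2, t_3, r_1, r_2, r_3 commutes with t_0, and that ⟨s_x, s_{t_0}⟩ = 0 for every x ∈ {t_1, t_2, t_3, r_1, r_2, r_3}. Then s_{t_0} = 0. -/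
/-- abstract lantern relation computation: Let a group `G` act
by unitary operators on a complex Hilbert space `V` (via
`ρ : G →* (V ≃ₗᵢ[ℂ] V)`) and let `u : G → V` be a 1-cocycle; for `t ∈ G` set
`s t = p t (u t)`, where `p t` is the orthogonal projection onto the `t`-fixed
vectors (characterized by: `p t x` is `t`-fixed and `x - p t x` is orthogonal
to every `t`-fixed vector).  Suppose `t₀ t₁ t₂ t₃ = r₁ r₂ r₃`, that each of
`t₁, t₂, t₃, r₁, r₂, r₃` commutes with `t₀`, and that `⟨s x, s t₀⟩ = 0` for
every `x ∈ {t₁, t₂, t₃, r₁, r₂, r₃}`.  Then `s t₀ = 0`. -/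
theorem lantern_relation_s_eq_zero
    {G V : Type*} [Group G]
    [NormedAddCommGroup V] [InnerProductSpace ℂ V] [CompleteSpace V]
    (ρ : G →* (V ≃ₗᵢ[ℂ] V)) (p : G → V → V)
    (hp_mem : ∀ (t : G) (x : V), ρ t (p t x) = p t x)
    (hp_orth : ∀ (t : G) (x y : V), ρ t y = y →
      (inner ℂ (x - p t x) y : ℂ) = 0)
    (u : G → V) (hu : ∀ a b : G, u (a * b) = u a + ρ a (u b))
    (t₀ t₁ t₂ t₃ r₁ r₂ r₃ : G)
    (hrel : t₀ * t₁ * t₂ * t₃ = r₁ * r₂ * r₃)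
    (hcomm : ∀ x ∈ [t₁, t₂, t₃, r₁, r₂, r₃], x * t₀ = t₀ * x)
    (horth : ∀ x ∈ [t₁, t₂, t₃, r₁, r₂, r₃],
      (inner ℂ (p x (u x)) (p t₀ (u t₀)) : ℂ) = 0) :
    p t₀ (u t₀) = 0 := by
  set s₀ := p t₀ (u t₀) with hs₀def
  have rho_mul : ∀ (a b : G) (v : V), ρ (a * b) v = ρ a (ρ b v) := by
    intro a b v; rw [map_mul]; rfl
  have hfix0 : ρ t₀ s₀ = s₀ := hp_mem t₀ (u t₀)
  -- move a unitary to the other side of the inner ℂ product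
  have inner_symm : ∀ (g : G) (a w : V),
      (inner ℂ (ρ g a) w : ℂ) = inner ℂ a ((ρ g).symm w) := by
    intro g a w
    conv_lhs => rw [← (ρ g).apply_symm_apply w]
    exact (ρ g).inner_map_map a ((ρ g).symm w)
  -- if g commutes with t₀ and w is t₀-fixed, then (ρ g).symm w is t₀-fixed
  have symm_fixed : ∀ g : G, g * t₀ = t₀ * g → ∀ w : V, ρ t₀ w = w →
      ρ t₀ ((ρ g).symm w) = (ρ g).symm w := by
    intro g hg w hw
    apply (ρ g).injective
    have hcg : ρ g (ρ t₀ ((ρ g).symm w)) = ρ t₀ (ρ g ((ρ g).symm w)) := by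
      rw [← rho_mul, ← rho_mul, hg]
    rw [hcg, (ρ g).apply_symm_apply, hw]
  -- key lemma: s₀ is fixed by every g commuting with t₀
  have fix : ∀ g : G, g * t₀ = t₀ * g → ρ g s₀ = s₀ := by
    intro g hg
    have hinner : ∀ w : V, ρ t₀ w = w → (inner ℂ (ρ g s₀ - s₀) w : ℂ) = 0 := by
      intro w hw
      have e1 : (inner ℂ (ρ g (u t₀ - s₀)) w : ℂ) = 0 := by
        rw [inner_symm]
        exact hp_orth t₀ (u t₀) _ (symm_fixed g hg w hw)
      have e2 : (inner ℂ (u t₀ - s₀) w : ℂ) = 0 := hp_orth t₀ (u t₀) w hw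
      have e3 : (inner ℂ (ρ g (u t₀) - u t₀) w : ℂ) = 0 := by
        have hc : ρ g (u t₀) - u t₀ = ρ t₀ (u g) - u g := by
          have h1 : u (g * t₀) = u (t₀ * g) := by rw [hg]
          rw [hu, hu] at h1
          linear_combination (norm := abel) h1
        rw [hc, inner_sub_left, inner_symm]
        have hsw : (ρ t₀).symm w = w := by
          conv_lhs => rw [← hw]
          exact (ρ t₀).symm_apply_apply w
        rw [hsw, sub_self]
      have hdecomp : ρ g s₀ - s₀ =
          (ρ g (u t₀) - u t₀) - (ρ g (u t₀ - s₀) - (u t₀ - s₀)) := by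
        rw [map_sub]; abel
      have expand : (inner ℂ (ρ g s₀ - s₀) w : ℂ) =
          (inner ℂ (ρ g (u t₀) - u t₀) w) - (inner ℂ (ρ g (u t₀ - s₀)) w)
            + (inner ℂ (u t₀ - s₀) w) := by
        rw [hdecomp]
        simp only [inner_sub_left]
        ring
      rw [expand, e1, e2, e3]
      ring
    have hAfix : ρ t₀ (ρ g s₀ - s₀) = ρ g s₀ - s₀ := by
      rw [map_sub, hfix0, ← rho_mul, ← hg, rho_mul, hfix0]
    have h0 := hinner _ hAfix
    rw [inner_self_eq_zero, sub_eq_zero] at h0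
    exact h0
  -- s₀ is fixed by all seven elements
  have fixt₁ : ρ t₁ s₀ = s₀ := fix t₁ (hcomm t₁ (by simp))
  have fixt₂ : ρ t₂ s₀ = s₀ := fix t₂ (hcomm t₂ (by simp))
  have fixt₃ : ρ t₃ s₀ = s₀ := fix t₃ (hcomm t₃ (by simp))
  have fixr₁ : ρ r₁ s₀ = s₀ := fix r₁ (hcomm r₁ (by simp))
  have fixr₂ : ρ r₂ s₀ = s₀ := fix r₂ (hcomm r₂ (by simp))
  have fixr₃ : ρ r₃ s₀ = s₀ := fix r₃ (hcomm r₃ (by simp))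
  have fixmul : ∀ a b : G, ρ a s₀ = s₀ → ρ b s₀ = s₀ → ρ (a * b) s₀ = s₀ := by
    intro a b ha hb
    rw [rho_mul, hb, ha]
  -- shifting by an element fixing s₀
  have shift : ∀ (g : G) (v : V), ρ g s₀ = s₀ →
      (inner ℂ (ρ g v) s₀ : ℂ) = inner ℂ v s₀ := by
    intro g v hg
    conv_lhs => rw [← hg]
    exact (ρ g).inner_map_map v s₀
  -- ⟪u x, s₀⟫ = ⟪p x (u x), s₀⟫ whenever ρ x s₀ = s₀
  have split : ∀ x : G, ρ x s₀ = s₀ →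
      (inner ℂ (u x) s₀ : ℂ) = inner ℂ (p x (u x)) s₀ := by
    intro x hx
    have := hp_orth x (u x) s₀ hx
    rw [inner_sub_left, sub_eq_zero] at this
    exact this
  have zt₁ : (inner ℂ (u t₁) s₀ : ℂ) = 0 := by
    rw [split t₁ fixt₁]; exact horth t₁ (by simp)
  have zt₂ : (inner ℂ (u t₂) s₀ : ℂ) = 0 := by
    rw [split t₂ fixt₂]; exact horth t₂ (by simp)
  have zt₃ : (inner ℂ (u t₃) s₀ : ℂ) = 0 := by
    rw [split t₃ fixt₃]; exact horth t₃ (by simp)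
  have zr₁ : (inner ℂ (u r₁) s₀ : ℂ) = 0 := by
    rw [split r₁ fixr₁]; exact horth r₁ (by simp)
  have zr₂ : (inner ℂ (u r₂) s₀ : ℂ) = 0 := by
    rw [split r₂ fixr₂]; exact horth r₂ (by simp)
  have zr₃ : (inner ℂ (u r₃) s₀ : ℂ) = 0 := by
    rw [split r₃ fixr₃]; exact horth r₃ (by simp)
  have zt₀ : (inner ℂ (u t₀) s₀ : ℂ) = inner ℂ s₀ s₀ := split t₀ hfix0
  -- expand both sides of the relation
  have hL : (inner ℂ (u (t₀ * t₁ * t₂ * t₃)) s₀ : ℂ) = inner ℂ s₀ s₀ := by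
    rw [hu, hu, hu, inner_add_left, inner_add_left, inner_add_left,
      shift t₀ (u t₁) hfix0,
      shift (t₀ * t₁) (u t₂) (fixmul _ _ hfix0 fixt₁),
      shift (t₀ * t₁ * t₂) (u t₃) (fixmul _ _ (fixmul _ _ hfix0 fixt₁) fixt₂),
      zt₀, zt₁, zt₂, zt₃]
    ring
  have hR : (inner ℂ (u (r₁ * r₂ * r₃)) s₀ : ℂ) = 0 := by
    rw [hu, hu, inner_add_left, inner_add_left,
      shift r₁ (u r₂) fixr₁,
      shift (r₁ * r₂) (u r₃) (fixmul _ _ fixr₁ fixr₂),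
      zr₁, zr₂, zr₃]
    ring
  have : (inner ℂ s₀ s₀ : ℂ) = 0 := by rw [← hL, hrel, hR]
  rwa [inner_self_eq_zero] at this
end

section
/- Let a group G act by unitary operators on a complex Hilbert space V and let u : G → V be a 1-cocycle; for t ∈ G set s_t = p_t(u(t)), where p_t is the orthogonal projection onto the t-fixed vectors. Suppose t ∈ G can be written as a product t = t_1^{ε_1} t_2^{ε_2} ⋯ t_n^{ε_n} with signs ε_j ∈ {1, −1}, where each t_j commutes with t and s_{t_j} = 0 for every j = 1, …, n. Then s_t = 0. -/
/-- abstract reduction of separating twists to non-separating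
ones: Let a group `G` act by unitary operators on a complex Hilbert space `V`
(via `ρ : G →* (V ≃ₗᵢ[ℂ] V)`) and let `u : G → V` be a 1-cocycle; for `t ∈ G`
set `s t = p t (u t)`, where `p t` is the orthogonal projection onto the
`t`-fixed vectors (characterized by: `p t x` is `t`-fixed and `x - p t x` is
orthogonal to every `t`-fixed vector).  Suppose `t ∈ G` can be written as a
product `t = t₁^{ε₁} ⋯ t_n^{ε_n}` with signs `ε_j = ±1`, where each `t_j`
commutes with `t` and `s t_j = 0` for every `j`.  Then `s t = 0`. -/
theorem s_eq_zero_of_product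
    {G V : Type*} [Group G]
    [NormedAddCommGroup V] [InnerProductSpace ℂ V] [CompleteSpace V]
    (ρ : G →* (V ≃ₗᵢ[ℂ] V)) (p : G → V → V)
    (hp_mem : ∀ (t : G) (x : V), ρ t (p t x) = p t x)
    (hp_orth : ∀ (t : G) (x y : V), ρ t y = y →
      (inner ℂ (x - p t x) y : ℂ) = 0)
    (u : G → V) (hu : ∀ a b : G, u (a * b) = u a + ρ a (u b))
    (t : G) (n : ℕ) (ts : Fin n → G) (εs : Fin n → ℤ)
    (hε : ∀ j : Fin n, εs j = 1 ∨ εs j = -1)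
    (hprod : t = (List.ofFn fun j : Fin n => ts j ^ εs j).prod)
    (hcomm : ∀ j : Fin n, ts j * t = t * ts j)
    (hs : ∀ j : Fin n, p (ts j) (u (ts j)) = 0) :
    p t (u t) = 0 := by
  set s := p t (u t) with hs_def
  have hmul : ∀ (a b : G) (x : V), ρ (a * b) x = ρ a (ρ b x) := by
    intro a b x; rw [map_mul]; rfl
  have hinv' : ∀ (a : G) (x : V), ρ a⁻¹ (ρ a x) = x := by
    intro a x; rw [← hmul, inv_mul_cancel, map_one]; rfl
  have hinv2 : ∀ (a : G) (x : V), ρ a (ρ a⁻¹ x) = x := by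
    intro a x; rw [← hmul, mul_inv_cancel, map_one]; rfl
  have hinner : ∀ (a : G) (x y : V), (inner ℂ (ρ a x) (ρ a y) : ℂ) = inner ℂ x y :=
    fun a x y => (ρ a).inner_map_map x y
  have hu1 : u 1 = 0 := by
    have h := hu 1 1
    rw [one_mul, map_one] at h
    simpa using h.symm
  -- s is fixed by every g commuting with t
  have hts : ρ t s = s := hp_mem t (u t)
  have hfix : ∀ g : G, g * t = t * g → ρ g s = s := by
    intro g hg
    set d := ρ g s - s with hd_def
    have hd_fixed : ρ t d = d := by
      rw [hd_def, map_sub, ← hmul, ← hg, hmul, hts]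
    have hg' : g⁻¹ * t = t * g⁻¹ := by
      have h' : g⁻¹ * (g * t) * g⁻¹ = g⁻¹ * (t * g) * g⁻¹ := by rw [hg]
      group at h'
      group
      simpa using h'.symm
    have hd'_fixed : ρ t (ρ g⁻¹ d) = ρ g⁻¹ d := by
      rw [← hmul, ← hg', hmul, hd_fixed]
    have h1 : (inner ℂ (u t - s) d : ℂ) = 0 := hp_orth t (u t) d hd_fixed
    have h2 : (inner ℂ (u t - s) (ρ g⁻¹ d) : ℂ) = 0 := hp_orth t (u t) _ hd'_fixed
    have hc : u g + ρ g (u t) = u t + ρ t (u g) := by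
      rw [← hu, ← hu, hg]
    -- ⟨ρ g (u t), d⟩ = ⟨u t, d⟩
    have e1 : (inner ℂ (ρ g (u t)) d : ℂ) = inner ℂ (u t) d := by
      have hgc : ρ g (u t) = u t + ρ t (u g) - u g := by
        rw [← hc]; abel
      have : (inner ℂ (ρ t (u g)) d : ℂ) = inner ℂ (u g) d := by
        conv_lhs => rw [← hd_fixed]
        exact hinner t (u g) d
      rw [hgc, inner_sub_left, inner_add_left, this]; ring
    -- ⟨ρ g s, d⟩ = ⟨s, d⟩
    have e2 : (inner ℂ (ρ g s) d : ℂ) = inner ℂ s d := by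
      have a1 : (inner ℂ (ρ g s) d : ℂ) = inner ℂ s (ρ g⁻¹ d) := by
        conv_lhs => rw [← hinv2 g d]
        exact hinner g s (ρ g⁻¹ d)
      have a2 : (inner ℂ (u t) (ρ g⁻¹ d) : ℂ) = inner ℂ s (ρ g⁻¹ d) := by
        have := h2; rw [inner_sub_left, sub_eq_zero] at this; exact this
      have a3 : (inner ℂ (u t) (ρ g⁻¹ d) : ℂ) = inner ℂ (ρ g (u t)) d := by
        conv_rhs => rw [← hinv2 g d]
        exact (hinner g (u t) (ρ g⁻¹ d)).symm
      have a4 : (inner ℂ (u t) d : ℂ) = inner ℂ s d := by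
        have := h1; rw [inner_sub_left, sub_eq_zero] at this; exact this
      rw [a1, ← a2, a3, e1, a4]
    have hdd : (inner ℂ d d : ℂ) = 0 := by
      rw [hd_def, inner_sub_left, e2, sub_self]
    have : d = 0 := inner_self_eq_zero.mp hdd
    rw [hd_def, sub_eq_zero] at this
    exact this
  have hfix_ts : ∀ j, ρ (ts j) s = s := fun j => hfix _ (hcomm j)
  have hfix_inv : ∀ j, ρ (ts j)⁻¹ s = s := by
    intro j
    conv_lhs => rw [← hfix_ts j]
    exact hinv' _ _
  have hfix_pow : ∀ j, ρ (ts j ^ εs j) s = s := by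
    intro j
    rcases hε j with h | h
    · rw [h, zpow_one]; exact hfix_ts j
    · rw [h, zpow_neg_one]; exact hfix_inv j
  have hinner_ts : ∀ j, (inner ℂ (u (ts j)) s : ℂ) = 0 := by
    intro j
    have h := hp_orth (ts j) (u (ts j)) s (hfix_ts j)
    rwa [hs j, sub_zero] at h
  have hinner_pow : ∀ j, (inner ℂ (u (ts j ^ εs j)) s : ℂ) = 0 := by
    intro j
    rcases hε j with h | h
    · rw [h, zpow_one]; exact hinner_ts j
    · rw [h, zpow_neg_one]
      have hinv_u : u (ts j)⁻¹ = - ρ (ts j)⁻¹ (u (ts j)) := by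
        have h2 := hu (ts j) (ts j)⁻¹
        rw [mul_inv_cancel, hu1] at h2
        have h3 : ρ (ts j) (u (ts j)⁻¹) = - u (ts j) := by
          rw [eq_neg_iff_add_eq_zero, add_comm]; exact h2.symm
        calc u (ts j)⁻¹ = ρ (ts j)⁻¹ (ρ (ts j) (u (ts j)⁻¹)) := (hinv' _ _).symm
          _ = - ρ (ts j)⁻¹ (u (ts j)) := by rw [h3, map_neg]
      rw [hinv_u, inner_neg_left]
      have : (inner ℂ (ρ (ts j)⁻¹ (u (ts j))) s : ℂ) = inner ℂ (u (ts j)) s := by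
        conv_lhs => rw [← hfix_inv j]
        exact hinner _ _ _
      rw [this, hinner_ts j, neg_zero]
  -- inner ℂ of cocycle of a product with s vanishes
  have hlist : ∀ L : List G, (∀ g ∈ L, ρ g s = s) →
      (∀ g ∈ L, (inner ℂ (u g) s : ℂ) = 0) → (inner ℂ (u L.prod) s : ℂ) = 0 := by
    intro L
    induction L with
    | nil => intro _ _; simp [hu1]
    | cons g L ih =>
      intro h1 h2
      rw [List.prod_cons, hu, inner_add_left]
      have e : (inner ℂ (ρ g (u L.prod)) s : ℂ) = inner ℂ (u L.prod) s := by
        conv_lhs => rw [← h1 g (List.mem_cons_self)]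
        exact hinner _ _ _
      rw [e, ih (fun x hx => h1 x (List.mem_cons_of_mem _ hx))
        (fun x hx => h2 x (List.mem_cons_of_mem _ hx)),
        h2 g (List.mem_cons_self), add_zero]
  have hut : (inner ℂ (u t) s : ℂ) = 0 := by
    rw [hprod]
    apply hlist
    · intro g hg
      obtain ⟨j, rfl⟩ := List.mem_ofFn.mp hg
      exact hfix_pow j
    · intro g hg
      obtain ⟨j, rfl⟩ := List.mem_ofFn.mp hg
      exact hinner_pow j
  have hfin := hp_orth t (u t) s hts
  rw [inner_sub_left, hut, zero_sub, neg_eq_zero] at hfin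
  exact inner_self_eq_zero.mp hfin
end

section
/- Let a group G act by unitary operators on a complex Hilbert space V and let u : G → V be a 1-cocycle. Let a, b ∈ G be commuting elements such that the element a b^{-1} acts trivially on V, the fixed subspaces V^a and V^b coincide, and p_a(u(a)) = 0 and p_b(u(b)) = 0, where p_a, p_b are the orthogonal projections onto V^a and V^b respectively. Then u(a b^{-1}) = 0. -/
/-- abstract vanishing on bounding pair maps: Let a group `G`
act by unitary operators on a complex Hilbert space `V` (via
`ρ : G →* (V ≃ₗᵢ[ℂ] V)`) and let `u : G → V` be a 1-cocycle.  Let `a, b ∈ G`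
be commuting elements such that `a b⁻¹` acts trivially on `V`, the fixed
subspaces `V^a` and `V^b` coincide, and `p a (u a) = 0` and `p b (u b) = 0`,
where `p a, p b` are the orthogonal projections onto `V^a`, `V^b`
(characterized by: `p t x` is `t`-fixed and `x - p t x` is orthogonal to every
`t`-fixed vector).  Then `u (a b⁻¹) = 0`. -/
theorem cocycle_vanishes_on_pair
    {G V : Type*} [Group G]
    [NormedAddCommGroup V] [InnerProductSpace ℂ V] [CompleteSpace V]
    (ρ : G →* (V ≃ₗᵢ[ℂ] V)) (p : G → V → V)
    (hp_mem : ∀ (t : G) (x : V), ρ t (p t x) = p t x)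
    (hp_orth : ∀ (t : G) (x y : V), ρ t y = y →
      (inner ℂ (x - p t x) y : ℂ) = 0)
    (u : G → V) (hu : ∀ g h : G, u (g * h) = u g + ρ g (u h))
    (a b : G) (hcomm : a * b = b * a)
    (htriv : ∀ x : V, ρ (a * b⁻¹) x = x)
    (hfix : ∀ x : V, ρ a x = x ↔ ρ b x = x)
    (ha : p a (u a) = 0) (hb : p b (u b) = 0) :
    u (a * b⁻¹) = 0 := by
  -- ρ a = ρ b pointwise
  have hab : ∀ x : V, ρ a x = ρ b x := by
    intro x
    have : ρ (a * b⁻¹ * b) x = ρ b x := by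
      rw [map_mul]
      exact htriv (ρ b x)
    simpa using this
  -- u (a * b⁻¹) = u a - u b
  have hdec : u a = u (a * b⁻¹) + u b := by
    have h1 : u (a * b⁻¹ * b) = u (a * b⁻¹) + ρ (a * b⁻¹) (u b) := hu _ _
    rw [inv_mul_cancel_right, htriv] at h1
    exact h1
  set w : V := u a - u b with hw
  -- w is a-fixed
  have hwfix : ρ a w = w := by
    have h2 : u a + ρ a (u b) = u b + ρ b (u a) := by
      rw [← hu, ← hu, hcomm]
    have : ρ a (u a) - ρ a (u b) = u a - u b := by
      rw [← hab (u a)] at h2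
      rw [sub_eq_sub_iff_add_eq_add, add_comm]
      exact h2.symm
    simpa [hw, map_sub] using this
  have hwfixb : ρ b w = w := (hfix w).mp hwfix
  -- orthogonality
  have o1 : (inner ℂ (u a) w : ℂ) = 0 := by
    have := hp_orth a (u a) w hwfix
    rwa [ha, sub_zero] at this
  have o2 : (inner ℂ (u b) w : ℂ) = 0 := by
    have := hp_orth b (u b) w hwfixb
    rwa [hb, sub_zero] at this
  have : (inner ℂ w w : ℂ) = 0 := by
    rw [hw, inner_sub_left, o1, o2, sub_zero]
  have hw0 : w = 0 := inner_self_eq_zero.mp this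
  have : u (a * b⁻¹) = u a - u b := eq_sub_of_add_eq hdec.symm
  rw [this, ← hw, hw0]
end

section
/- Fix g ≥ 1 and let f : ℤ^{2g} → ℂ be square-summable (Σ_m |f(m)|² < ∞). Suppose that for each of the 4g shear maps T of ℤ^{2g} and for every k ∈ ℕ there is a constant C (depending on T and k) such that |m|^k · |f(m) − f(T(m))| ≤ C for all m ∈ ℤ^{2g}. Then f is rapidly decreasing away from zero: for every k ∈ ℕ there is a constant F_k such that |m|^k · |f(m)| ≤ F_k for all nonzero m ∈ ℤ^{2g}. -/
open Filter

/-- An element of `ℤ^{2g}` is encoded as `m : Fin g → ℤ × ℤ`, where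
`(m j).1 = a_j` and `(m j).2 = b_j`.  Its norm is `|m| = Σ_j (|a_j| + |b_j|)`. -/
def homNorm {g : ℕ} (m : Fin g → ℤ × ℤ) : ℤ :=
  ∑ j : Fin g, (|(m j).1| + |(m j).2|)

/-- The shear map `S_{j,ε}`: replaces `b_j` by `b_j + ε * a_j`, leaving all
other coordinates unchanged. -/
def shearS {g : ℕ} (j : Fin g) (ε : ℤ) (m : Fin g → ℤ × ℤ) : Fin g → ℤ × ℤ :=
  Function.update m j ((m j).1, (m j).2 + ε * (m j).1)

/-- The shear map `R_{j,ε}`: replaces `a_j` by `a_j + ε * b_j`, leaving all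
other coordinates unchanged. -/
def shearR {g : ℕ} (j : Fin g) (ε : ℤ) (m : Fin g → ℤ × ℤ) : Fin g → ℤ × ℤ :=
  Function.update m j ((m j).1 + ε * (m j).2, (m j).2)

lemma homNorm_nonneg {g : ℕ} (m : Fin g → ℤ × ℤ) : 0 ≤ homNorm m :=
  Finset.sum_nonneg fun _ _ => by positivity

lemma homNorm_update {g : ℕ} (m : Fin g → ℤ × ℤ) (j : Fin g) (p : ℤ × ℤ) :
    homNorm (Function.update m j p) = homNorm m + (|p.1| + |p.2|) - (|(m j).1| + |(m j).2|) := by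
  unfold homNorm
  rw [← Finset.add_sum_erase _ (fun i => |(Function.update m j p i).1| + |(Function.update m j p i).2|) (Finset.mem_univ j),
     ← Finset.add_sum_erase _ (fun i => |(m i).1| + |(m i).2|) (Finset.mem_univ j)]
  simp only [Function.update_self]
  rw [Finset.sum_congr rfl (fun i hi => by rw [Function.update_of_ne (Finset.ne_of_mem_erase hi)])]
  ring

lemma one_le_homNorm {g : ℕ} {m : Fin g → ℤ × ℤ} (hm : m ≠ 0) : 1 ≤ homNorm m := by
  obtain ⟨j, hj⟩ := Function.ne_iff.mp hm
  have h1 : 1 ≤ |(m j).1| + |(m j).2| := by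
    by_contra h
    have n1 := abs_nonneg (m j).1
    have n2 := abs_nonneg (m j).2
    have e1 : (m j).1 = 0 := abs_eq_zero.mp (by omega)
    have e2 : (m j).2 = 0 := abs_eq_zero.mp (by omega)
    exact hj (Prod.ext e1 e2)
  calc (1:ℤ) ≤ |(m j).1| + |(m j).2| := h1
    _ ≤ homNorm m := by
        unfold homNorm
        exact Finset.single_le_sum (f := fun i => |(m i).1| + |(m i).2|)
          (fun i _ => by positivity) (Finset.mem_univ j)

lemma abs_add_of_mul_nonneg {x y : ℤ} (h : 0 ≤ x * y) : |x + y| = |x| + |y| := by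
  rcases mul_nonneg_iff.mp h with ⟨h1, h2⟩ | ⟨h1, h2⟩
  · rw [abs_of_nonneg h1, abs_of_nonneg h2, abs_of_nonneg (by linarith)]
  · rw [abs_of_nonpos h1, abs_of_nonpos h2, abs_of_nonpos (by linarith)]; ring

lemma abs_add_nat_mul {x y : ℤ} (h : 0 ≤ x * y) (i : ℕ) :
    |x + (i : ℤ) * y| = |x| + (i : ℤ) * |y| := by
  induction i with
  | zero => simp
  | succ n ih =>
      have hs : 0 ≤ (x + (n : ℤ) * y) * y := by nlinarith [sq_nonneg y]
      have e : x + ((n + 1 : ℕ) : ℤ) * y = (x + (n : ℤ) * y) + y := by push_cast; ring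
      rw [e, abs_add_of_mul_nonneg hs, ih]
      push_cast; ring

lemma sum_inv_sq_le' (n : ℕ) (hn : 1 ≤ n) :
    ∑ i ∈ Finset.range n, (1 : ℝ) / ((i + 1) ^ 2) ≤ 2 - 1 / (n : ℝ) := by
  induction n with
  | zero => omega
  | succ n ih =>
      rcases Nat.eq_or_lt_of_le hn with h | h
      · simp [← h]; norm_num
      · have hn1 : 1 ≤ n := by omega
        rw [Finset.sum_range_succ]
        have hpos : (0:ℝ) < (n:ℝ) := by exact_mod_cast hn1
        have h1 : (1 : ℝ) / (((n : ℝ) + 1) ^ 2) + 1 / ((n : ℝ) + 1) ≤ 1 / (n : ℝ) := by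
          rw [div_add_div _ _ (by positivity) (by positivity),
            div_le_div_iff₀ (by positivity) (by positivity)]
          nlinarith [sq_nonneg ((n : ℝ) + 1)]
        have ih' := ih hn1
        push_cast
        linarith

lemma sum_inv_sq_le (n : ℕ) : ∑ i ∈ Finset.range n, (1 : ℝ) / ((i + 1) ^ 2) ≤ 2 := by
  rcases Nat.eq_zero_or_pos n with h | h
  · simp [h]
  · have := sum_inv_sq_le' n h
    have hpos : (0:ℝ) < (n:ℝ) := by exact_mod_cast h
    have : (0:ℝ) ≤ 1 / (n:ℝ) := by positivity
    linarith

/-- Core estimate: if the norm grows linearly along the orbit of `m` under `T`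
and the `T`-differences of `f` decay with exponent `k + 2`, then
`|m|^k * ‖f m‖ ≤ 2 C`. -/
lemma core {g : ℕ} (f : (Fin g → ℤ × ℤ) → ℂ)
    (hf0 : Tendsto (fun x => ‖f x‖ ^ 2) cofinite (nhds 0))
    (T : (Fin g → ℤ × ℤ) → (Fin g → ℤ × ℤ)) (m : Fin g → ℤ × ℤ)
    (c : ℤ) (hc : 1 ≤ c)
    (hnorm : ∀ i : ℕ, homNorm (T^[i] m) = homNorm m + i * c)
    (k : ℕ) (C : ℝ)
    (hC : ∀ m', (homNorm m' : ℝ) ^ (k + 2) * ‖f m' - f (T m')‖ ≤ C)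
    (hm : 1 ≤ homNorm m) :
    (homNorm m : ℝ) ^ k * ‖f m‖ ≤ 2 * C := by
  set N : ℝ := (homNorm m : ℝ) with hNdef
  have hN : 1 ≤ N := by rw [hNdef]; exact_mod_cast hm
  set seq : ℕ → (Fin g → ℤ × ℤ) := fun i => T^[i] m with hseq
  have hinj : Function.Injective seq := by
    intro i i' h
    have h1 := hnorm i
    have h2 := hnorm i'
    rw [show T^[i] m = seq i from rfl, h] at h1
    have : (i : ℤ) * c = (i' : ℤ) * c := by rw [h2] at h1; linarith
    have : (i : ℤ) = i' := mul_right_cancel₀ (by omega) this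
    exact_mod_cast this
  have hC0 : 0 ≤ C := le_trans (by positivity) (hC m)
  have hxlow : ∀ i : ℕ, N ≤ ((homNorm (seq i) : ℤ) : ℝ) ∧
      ((i : ℝ) + 1) ≤ ((homNorm (seq i) : ℤ) : ℝ) := by
    intro i
    have h1 : homNorm (seq i) = homNorm m + i * c := hnorm i
    constructor
    · rw [h1]; push_cast
      have : (0:ℝ) ≤ (i : ℝ) * (c : ℝ) := by
        apply mul_nonneg (by positivity)
        exact_mod_cast le_trans zero_le_one hc
      linarith
    · rw [h1]; push_cast
      have hc' : (1:ℝ) ≤ (c:ℝ) := by exact_mod_cast hc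
      nlinarith [Nat.cast_nonneg (α := ℝ) i]
  have hdi : ∀ i : ℕ, ‖f (seq i) - f (seq (i + 1))‖ ≤ C / (N ^ k * ((i : ℝ) + 1) ^ 2) := by
    intro i
    have hx := hC (seq i)
    rw [show T (seq i) = seq (i + 1) from (Function.iterate_succ_apply' T i m).symm] at hx
    have hlow := hxlow i
    have hxk : N ^ k * ((i : ℝ) + 1) ^ 2 ≤ ((homNorm (seq i) : ℤ) : ℝ) ^ (k + 2) := by
      rw [pow_add]
      apply mul_le_mul
      · exact pow_le_pow_left₀ (by linarith) hlow.1 k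
      · exact pow_le_pow_left₀ (by positivity) hlow.2 2
      · positivity
      · exact pow_nonneg (le_trans (by linarith) hlow.1) k
    have hN0 : (0:ℝ) < N := lt_of_lt_of_le one_pos hN
    have hpos : (0:ℝ) < N ^ k * ((i : ℝ) + 1) ^ 2 :=
      mul_pos (pow_pos hN0 k) (by positivity)
    rw [le_div_iff₀ hpos]
    calc ‖f (seq i) - f (seq (i + 1))‖ * (N ^ k * ((i : ℝ) + 1) ^ 2)
        = N ^ k * ((i : ℝ) + 1) ^ 2 * ‖f (seq i) - f (seq (i + 1))‖ := by ring
      _ ≤ ((homNorm (seq i) : ℤ) : ℝ) ^ (k + 2) * ‖f (seq i) - f (seq (i + 1))‖ :=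
          mul_le_mul_of_nonneg_right hxk (norm_nonneg _)
      _ ≤ C := hx
  have hN0 : (0:ℝ) < N := lt_of_lt_of_le one_pos hN
  have hNk : (0:ℝ) < N ^ k := pow_pos hN0 k
  -- telescoping bound
  have htel : ∀ n : ℕ, ‖f m‖ ≤ 2 * C / N ^ k + ‖f (seq n)‖ := by
    intro n
    have hd := dist_le_range_sum_dist (fun i => f (seq i)) n
    have hsum : ∑ i ∈ Finset.range n, dist (f (seq i)) (f (seq (i + 1)))
        ≤ 2 * C / N ^ k := by
      calc ∑ i ∈ Finset.range n, dist (f (seq i)) (f (seq (i + 1)))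
          ≤ ∑ i ∈ Finset.range n, C / (N ^ k * ((i : ℝ) + 1) ^ 2) := by
            apply Finset.sum_le_sum
            intro i _
            rw [dist_eq_norm]
            exact hdi i
        _ = C / N ^ k * ∑ i ∈ Finset.range n, (1 : ℝ) / ((i + 1) ^ 2) := by
            rw [Finset.mul_sum]
            apply Finset.sum_congr rfl
            intro i _
            rw [div_mul_div_comm, mul_one]
        _ ≤ C / N ^ k * 2 := by
            apply mul_le_mul_of_nonneg_left (sum_inv_sq_le n) (div_nonneg hC0 hNk.le)
        _ = 2 * C / N ^ k := by ring
    have h0 : seq 0 = m := rfl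
    calc ‖f m‖ = ‖(f m - f (seq n)) + f (seq n)‖ := by ring_nf
      _ ≤ ‖f m - f (seq n)‖ + ‖f (seq n)‖ := norm_add_le _ _
      _ = dist (f (seq 0)) (f (seq n)) + ‖f (seq n)‖ := by rw [h0, dist_eq_norm]
      _ ≤ 2 * C / N ^ k + ‖f (seq n)‖ := by linarith [le_trans hd hsum]
  -- the tail tends to zero
  have h1 : Tendsto seq atTop cofinite := Nat.cofinite_eq_atTop ▸ hinj.tendsto_cofinite
  have h2 : Tendsto (fun n => ‖f (seq n)‖ ^ 2) atTop (nhds 0) := hf0.comp h1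
  have h3 : Tendsto (fun n => ‖f (seq n)‖) atTop (nhds 0) := by
    have h4 := (Real.continuous_sqrt.tendsto 0).comp h2
    simp only [Function.comp_def, Real.sqrt_zero] at h4
    exact h4.congr fun n => Real.sqrt_sq (norm_nonneg _)
  have hle : ‖f m‖ - 2 * C / N ^ k ≤ 0 :=
    ge_of_tendsto' h3 fun n => by linarith [htel n]
  rw [← le_div_iff₀' hNk]
  linarith

lemma shearS_iterate {g : ℕ} (j : Fin g) (ε : ℤ) (m : Fin g → ℤ × ℤ) (i : ℕ) :
    (shearS j ε)^[i] m = Function.update m j ((m j).1, (m j).2 + (i : ℤ) * (ε * (m j).1)) := by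
  induction i with
  | zero => simp
  | succ n ih =>
      rw [Function.iterate_succ_apply', ih]
      unfold shearS
      simp only [Function.update_self, Function.update_idem]
      exact congrArg (Function.update m j) (Prod.ext rfl (by push_cast; ring))

lemma shearR_iterate {g : ℕ} (j : Fin g) (ε : ℤ) (m : Fin g → ℤ × ℤ) (i : ℕ) :
    (shearR j ε)^[i] m = Function.update m j ((m j).1 + (i : ℤ) * (ε * (m j).2), (m j).2) := by
  induction i with
  | zero => simp
  | succ n ih =>
      rw [Function.iterate_succ_apply', ih]
      unfold shearR
      simp only [Function.update_self, Function.update_idem]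
      exact congrArg (Function.update m j) (Prod.ext (by push_cast; ring) rfl)

lemma abs_eps_mul {ε x : ℤ} (hε : ε = 1 ∨ ε = -1) : |ε * x| = |x| := by
  rcases hε with h | h <;> subst h <;> simp

lemma homNorm_shearS_iterate {g : ℕ} {j : Fin g} {ε : ℤ} (hε : ε = 1 ∨ ε = -1)
    {m : Fin g → ℤ × ℤ} (hsign : 0 ≤ (m j).2 * (ε * (m j).1)) (i : ℕ) :
    homNorm ((shearS j ε)^[i] m) = homNorm m + (i : ℤ) * |(m j).1| := by
  rw [shearS_iterate, homNorm_update]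
  simp only
  rw [abs_add_nat_mul hsign i, abs_eps_mul hε]
  ring

lemma homNorm_shearR_iterate {g : ℕ} {j : Fin g} {ε : ℤ} (hε : ε = 1 ∨ ε = -1)
    {m : Fin g → ℤ × ℤ} (hsign : 0 ≤ (m j).1 * (ε * (m j).2)) (i : ℕ) :
    homNorm ((shearR j ε)^[i] m) = homNorm m + (i : ℤ) * |(m j).2| := by
  rw [shearR_iterate, homNorm_update]
  simp only
  rw [abs_add_nat_mul hsign i, abs_eps_mul hε]
  ring

/-- Fix `g ≥ 1` and let `f : ℤ^{2g} → ℂ` be square-summable.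
Suppose that for each of the `4g` shear maps `T` and every `k ∈ ℕ` there is a
constant `C` with `|m|^k ⬝ |f(m) − f(T(m))| ≤ C` for all `m`.  Then `f` is
rapidly decreasing away from zero: for every `k ∈ ℕ` there is `F_k` with
`|m|^k ⬝ |f(m)| ≤ F_k` for all nonzero `m`. -/
theorem rapid_decay_of_shear_differences
    (g : ℕ) (hg : 1 ≤ g) (f : (Fin g → ℤ × ℤ) → ℂ)
    (hf : Summable fun m : Fin g → ℤ × ℤ => ‖f m‖ ^ 2)
    (hS : ∀ (j : Fin g) (ε : ℤ), (ε = 1 ∨ ε = -1) → ∀ k : ℕ, ∃ C : ℝ,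
      ∀ m : Fin g → ℤ × ℤ,
        (homNorm m : ℝ) ^ k * ‖f m - f (shearS j ε m)‖ ≤ C)
    (hR : ∀ (j : Fin g) (ε : ℤ), (ε = 1 ∨ ε = -1) → ∀ k : ℕ, ∃ C : ℝ,
      ∀ m : Fin g → ℤ × ℤ,
        (homNorm m : ℝ) ^ k * ‖f m - f (shearR j ε m)‖ ≤ C) :
    ∀ k : ℕ, ∃ F : ℝ, ∀ m : Fin g → ℤ × ℤ, m ≠ 0 →
      (homNorm m : ℝ) ^ k * ‖f m‖ ≤ F := by
  have hf0 : Tendsto (fun m => ‖f m‖ ^ 2) cofinite (nhds 0) := hf.tendsto_cofinite_zero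
  intro k
  choose CS hCS using fun (j : Fin g) (ε : ℤ) (hε : ε = 1 ∨ ε = -1) => hS j ε hε (k + 2)
  choose CR hCR using fun (j : Fin g) (ε : ℤ) (hε : ε = 1 ∨ ε = -1) => hR j ε hε (k + 2)
  have hne : (Finset.univ : Finset (Fin g)).Nonempty := ⟨⟨0, hg⟩, Finset.mem_univ _⟩
  set F0 : Fin g → ℝ := fun j =>
    max (max (CS j 1 (Or.inl rfl)) (CS j (-1) (Or.inr rfl)))
        (max (CR j 1 (Or.inl rfl)) (CR j (-1) (Or.inr rfl))) with hF0
  refine ⟨2 * Finset.univ.sup' hne F0, ?_⟩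
  intro m hm
  obtain ⟨j, hj⟩ := Function.ne_iff.mp hm
  have hsup : F0 j ≤ Finset.univ.sup' hne F0 := Finset.le_sup' F0 (Finset.mem_univ j)
  have h1 := one_le_homNorm hm
  by_cases ha : (m j).1 = 0
  · -- `a_j = 0`, so `b_j ≠ 0`: use the shear `R_{j,ε}`.
    have hb : (m j).2 ≠ 0 := fun h => hj (Prod.ext ha h)
    have hcpos : 1 ≤ |(m j).2| := Int.one_le_abs hb
    rcases le_or_gt 0 ((m j).1 * (m j).2) with hab | hab
    · have hsign : 0 ≤ (m j).1 * ((1:ℤ) * (m j).2) := by rw [one_mul]; exact hab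
      have hcore := core f hf0 (shearR j 1) m |(m j).2| hcpos
        (fun i => homNorm_shearR_iterate (Or.inl rfl) hsign i) k
        (CR j 1 (Or.inl rfl)) (hCR j 1 (Or.inl rfl)) h1
      have hF : CR j 1 (Or.inl rfl) ≤ F0 j := le_trans (le_max_left _ _) (le_max_right _ _)
      linarith
    · have hsign : 0 ≤ (m j).1 * ((-1:ℤ) * (m j).2) := by nlinarith
      have hcore := core f hf0 (shearR j (-1)) m |(m j).2| hcpos
        (fun i => homNorm_shearR_iterate (Or.inr rfl) hsign i) k
        (CR j (-1) (Or.inr rfl)) (hCR j (-1) (Or.inr rfl)) h1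
      have hF : CR j (-1) (Or.inr rfl) ≤ F0 j := le_trans (le_max_right _ _) (le_max_right _ _)
      linarith
  · -- `a_j ≠ 0`: use the shear `S_{j,ε}`.
    have hcpos : 1 ≤ |(m j).1| := Int.one_le_abs ha
    rcases le_or_gt 0 ((m j).1 * (m j).2) with hab | hab
    · have hsign : 0 ≤ (m j).2 * ((1:ℤ) * (m j).1) := by nlinarith
      have hcore := core f hf0 (shearS j 1) m |(m j).1| hcpos
        (fun i => homNorm_shearS_iterate (Or.inl rfl) hsign i) k
        (CS j 1 (Or.inl rfl)) (hCS j 1 (Or.inl rfl)) h1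
      have hF : CS j 1 (Or.inl rfl) ≤ F0 j := le_trans (le_max_left _ _) (le_max_left _ _)
      linarith
    · have hsign : 0 ≤ (m j).2 * ((-1:ℤ) * (m j).1) := by nlinarith
      have hcore := core f hf0 (shearS j (-1)) m |(m j).1| hcpos
        (fun i => homNorm_shearS_iterate (Or.inr rfl) hsign i) k
        (CS j (-1) (Or.inr rfl)) (hCS j (-1) (Or.inr rfl)) h1
      have hF : CS j (-1) (Or.inr rfl) ≤ F0 j := le_trans (le_max_right _ _) (le_max_left _ _)
      linarith
end
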